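/- arXiv:0904.2970 — 2 statements merged into one kernel-verified Lean document; each statement's English description precedes it below -/
import Mathlib

section
/- Let X be a real Banach space that is an M-ideal in its bidual, i.e., with ι_X : X → X** and ι_{X*} : X* → X*** the canonical isometric embeddings and, for F ∈ X***, πF := ι_{X*}(F ∘ ι_X), one has ‖F‖ = ‖πF‖ + ‖F − πF‖ for every F ∈ X***. Let X⁗ := (X***)* be the fourth dual, j : X → X⁗ the composition of the canonical embeddings X → X** → X⁗, and let u ∈ X⁗ satisfy ‖u‖ = 1 and u(ι_{X*}(x*)) = 0 for every x* ∈ X*. Then ‖j(x) + a·u‖ = max(‖x‖, |a|) for every x ∈ X and every scalar a ∈ ℝ. -/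
/-- The topological dual of a seminormed space, as `NormedSpace.Dual` was defined in the older
Mathlib (it has since been replaced by `StrongDual`, which takes only topological arguments). -/
abbrev NormedSpace.Dual (𝕜 : Type*) [NontriviallyNormedField 𝕜] (E : Type*)
    [SeminormedAddCommGroup E] [NormedSpace 𝕜 E] : Type _ :=
  E →L[𝕜] 𝕜

open NormedSpace

theorem norm_add_smul_of_mIdeal_perp
    (X : Type) [NormedAddCommGroup X] [NormedSpace ℝ X] [CompleteSpace X]
    -- `X` is an M-ideal in its bidual:
    (hM : ∀ F : Dual ℝ (Dual ℝ (Dual ℝ X)),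
      ‖F‖ = ‖inclusionInDoubleDual ℝ (Dual ℝ X) (F.comp (inclusionInDoubleDual ℝ X))‖ +
        ‖F - inclusionInDoubleDual ℝ (Dual ℝ X) (F.comp (inclusionInDoubleDual ℝ X))‖)
    -- `j : X → X⁗` is the composition of the canonical embeddings `X → X** → X⁗`:
    (j : X →L[ℝ] Dual ℝ (Dual ℝ (Dual ℝ (Dual ℝ X))))
    (hj : j = (inclusionInDoubleDual ℝ (Dual ℝ (Dual ℝ X))).comp (inclusionInDoubleDual ℝ X))
    (u : Dual ℝ (Dual ℝ (Dual ℝ (Dual ℝ X))))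
    (hu_norm : ‖u‖ = 1)
    (hu_perp : ∀ xstar : Dual ℝ X, u (inclusionInDoubleDual ℝ (Dual ℝ X) xstar) = 0) :
    ∀ (x : X) (a : ℝ), ‖j x + a • u‖ = max ‖x‖ |a| := by
  intro x a
  set v := j x + a • u with hv
  have hnonneg : (0:ℝ) ≤ max ‖x‖ |a| := le_max_of_le_left (norm_nonneg x)
  -- isometry facts
  have hiso : ∀ g : Dual ℝ X, ‖inclusionInDoubleDual ℝ (Dual ℝ X) g‖ = ‖g‖ := fun g =>
    (inclusionInDoubleDualLi ℝ (E := Dual ℝ X)).norm_map g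
  have hjval : ∀ F : Dual ℝ (Dual ℝ (Dual ℝ X)), (j x) F = F (inclusionInDoubleDual ℝ X x) := by
    intro F; rw [hj]; rfl
  -- key: v F = F(ι x) + a * u F
  have hvF : ∀ F : Dual ℝ (Dual ℝ (Dual ℝ X)),
      v F = F (inclusionInDoubleDual ℝ X x) + a * u F := by
    intro F
    simp [hv, hjval F]
  apply le_antisymm
  · -- upper bound
    apply ContinuousLinearMap.opNorm_le_bound _ hnonneg
    intro F
    set g : Dual ℝ X := F.comp (inclusionInDoubleDual ℝ X) with hg
    set P := inclusionInDoubleDual ℝ (Dual ℝ X) g with hP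
    have huF : u F = u (F - P) := by
      have := hu_perp g
      simp [hP, map_sub, this]
    have h1 : |F (inclusionInDoubleDual ℝ X x)| ≤ ‖x‖ * ‖P‖ := by
      have : F (inclusionInDoubleDual ℝ X x) = g x := rfl
      rw [this, hP, hiso g]
      calc |g x| ≤ ‖g‖ * ‖x‖ := g.le_opNorm x
        _ = ‖x‖ * ‖g‖ := mul_comm _ _
    have h2 : |a * u (F - P)| ≤ |a| * ‖F - P‖ := by
      rw [abs_mul]
      refine mul_le_mul_of_nonneg_left ?_ (abs_nonneg a)
      calc |u (F - P)| ≤ ‖u‖ * ‖F - P‖ := u.le_opNorm _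
        _ = ‖F - P‖ := by rw [hu_norm, one_mul]
    calc ‖v F‖ = |F (inclusionInDoubleDual ℝ X x) + a * u (F - P)| := by
          rw [hvF F, huF]; rfl
      _ ≤ |F (inclusionInDoubleDual ℝ X x)| + |a * u (F - P)| := abs_add_le _ _
      _ ≤ ‖x‖ * ‖P‖ + |a| * ‖F - P‖ := add_le_add h1 h2
      _ ≤ max ‖x‖ |a| * ‖P‖ + max ‖x‖ |a| * ‖F - P‖ := by
          gcongr
          · exact le_max_left _ _
          · exact le_max_right _ _
      _ = max ‖x‖ |a| * (‖P‖ + ‖F - P‖) := by ring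
      _ = max ‖x‖ |a| * ‖F‖ := by rw [← hM F]
  · -- lower bound
    apply max_le
    · -- ‖x‖ ≤ ‖v‖
      apply norm_le_dual_bound ℝ x (norm_nonneg v)
      intro f
      have hFf : v (inclusionInDoubleDual ℝ (Dual ℝ X) f) = f x := by
        rw [hvF]
        simp [hu_perp f]
      calc ‖f x‖ = ‖v (inclusionInDoubleDual ℝ (Dual ℝ X) f)‖ := by rw [hFf]
        _ ≤ ‖v‖ * ‖inclusionInDoubleDual ℝ (Dual ℝ X) f‖ := v.le_opNorm _
        _ = ‖v‖ * ‖f‖ := by rw [hiso f]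
    · -- |a| ≤ ‖v‖
      have : ‖a • u‖ ≤ ‖v‖ := by
        apply ContinuousLinearMap.opNorm_le_bound _ (norm_nonneg v)
        intro F
        set g : Dual ℝ X := F.comp (inclusionInDoubleDual ℝ X) with hg
        set P := inclusionInDoubleDual ℝ (Dual ℝ X) g with hP
        have hFP : (F - P) (inclusionInDoubleDual ℝ X x) = 0 := by
          have : P (inclusionInDoubleDual ℝ X x) = g x := rfl
          simp [ContinuousLinearMap.sub_apply, this]
          exact sub_eq_zero.mpr rfl
        have huP : u P = 0 := hu_perp g
        have hva : v (F - P) = a * u F := by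
          rw [hvF (F - P), hFP, map_sub u, huP]
          ring
        calc ‖(a • u) F‖ = ‖v (F - P)‖ := by
              simp only [ContinuousLinearMap.smul_apply, hva, smul_eq_mul]
          _ ≤ ‖v‖ * ‖F - P‖ := v.le_opNorm _
          _ ≤ ‖v‖ * ‖F‖ := by
              refine mul_le_mul_of_nonneg_left ?_ (norm_nonneg v)
              rw [hM F]
              exact le_add_of_nonneg_left (norm_nonneg (inclusionInDoubleDual ℝ (Dual ℝ X) (F.comp (inclusionInDoubleDual ℝ X))))
      calc |a| = |a| * ‖u‖ := by rw [hu_norm, mul_one]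
        _ = ‖a • u‖ := (norm_smul a u).symm
        _ ≤ ‖v‖ := this
end

section
/- Let (Ω, P) be a probability space and Ψ : [0, ∞) → [0, ∞) a non-decreasing continuous convex function with Ψ(0) = 0. Let (g_n)_{n≥1} be a sequence of measurable real- (or complex-) valued functions on Ω such that ∫_Ω Ψ(|g_n|) dP ≤ 1 for every n. Then there exist a sequence (f_n)_{n≥1} of essentially bounded measurable functions on Ω and a measurable function g : Ω → [0, ∞) with ∫_Ω Ψ(g) dP ≤ 1, such that |g_n − f_n| ≤ g almost everywhere, for every n ≥ 1. -/
open MeasureTheory ENNReal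

/-- Given a sequence `(g n)` in the unit ball of the Orlicz space `L^Ψ(P)` over a probability
space, there are essentially bounded functions `(f n)` and a nonnegative `G` in the unit ball
of `L^Ψ(P)` with `|g n - f n| ≤ G` a.e. for all `n`. -/
theorem exists_bounded_and_dominating_of_orlicz_ball
    {Ω : Type*} [MeasurableSpace Ω] (P : Measure Ω) [IsProbabilityMeasure P]
    (Ψ : ℝ → ℝ)
    (hΨ_mono : MonotoneOn Ψ (Set.Ici 0))
    (hΨ_cont : ContinuousOn Ψ (Set.Ici 0))
    (hΨ_convex : ConvexOn ℝ (Set.Ici 0) Ψ)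
    (hΨ_zero : Ψ 0 = 0)
    (hΨ_nonneg : ∀ x : ℝ, 0 ≤ x → 0 ≤ Ψ x)
    (g : ℕ → Ω → ℝ) (hg_meas : ∀ n, Measurable (g n))
    (hg : ∀ n, ∫⁻ ω, ENNReal.ofReal (Ψ |g n ω|) ∂P ≤ 1) :
    ∃ (f : ℕ → Ω → ℝ) (G : Ω → ℝ),
      (∀ n, Measurable (f n)) ∧
      (∀ n, ∃ M : ℝ, ∀ᵐ ω ∂P, |f n ω| ≤ M) ∧
      Measurable G ∧ (∀ ω, 0 ≤ G ω) ∧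
      (∫⁻ ω, ENNReal.ofReal (Ψ (G ω)) ∂P ≤ 1) ∧
      (∀ n, ∀ᵐ ω ∂P, |g n ω - f n ω| ≤ G ω) := by
  classical
  -- A continuous extension of Ψ to all of ℝ
  set Ψ' : ℝ → ℝ := fun x => Ψ (max x 0) with hΨ'def
  have hΨ'_cont : Continuous Ψ' :=
    hΨ_cont.comp_continuous (continuous_id.max continuous_const)
      (fun x => Set.mem_Ici.2 (le_max_right _ _))
  have hΨ'_eq : ∀ x : ℝ, 0 ≤ x → Ψ' x = Ψ x := fun x hx => by
    simp [hΨ'def, max_eq_left hx]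
  have hΨ'_meas : Measurable Ψ' := hΨ'_cont.measurable
  set e : ℕ → ℝ≥0∞ := fun n => 2⁻¹ ^ (n + 1) with he_def
  have he_pos : ∀ n, 0 < e n := fun n =>
    ENNReal.pow_pos (ENNReal.inv_pos.2 (by norm_num)) _
  have he_sum : (∑' n : ℕ, e n) = 1 := by
    simp only [he_def]
    rw [ENNReal.tsum_geometric_add_one, ENNReal.one_sub_inv_two]
    exact ENNReal.mul_inv_cancel (ENNReal.inv_ne_zero.2 (by norm_num))
      (ENNReal.inv_ne_top.2 (by norm_num))
  -- choose truncation levels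
  have key : ∀ n : ℕ, ∃ M : ℝ, P {ω | M < |g n ω|} ≤ e n ∧
      ∫⁻ ω in {ω | M < |g n ω|}, ENNReal.ofReal (Ψ' |g n ω|) ∂P ≤ e n := by
    intro n
    set ν : Measure Ω := P.withDensity (fun ω => ENNReal.ofReal (Ψ' |g n ω|)) with hν_def
    have hdens_meas : Measurable fun ω => ENNReal.ofReal (Ψ' |g n ω|) :=
      (hΨ'_meas.comp (hg_meas n).abs).ennreal_ofReal
    set ρ : Measure Ω := P + ν with hρ_def
    set s : ℕ → Set Ω := fun M => {ω | (M : ℝ) < |g n ω|} with hs_def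
    have hs_meas : ∀ M : ℕ, MeasurableSet (s M) := fun M =>
      measurableSet_lt measurable_const (hg_meas n).abs
    have hs_anti : Antitone s := by
      intro M M' hMM' ω hω
      simp only [hs_def, Set.mem_setOf_eq] at hω ⊢
      exact lt_of_le_of_lt (Nat.cast_le.2 hMM') hω
    have hν_fin : ν Set.univ ≤ 1 := by
      rw [hν_def, withDensity_apply _ MeasurableSet.univ, Measure.restrict_univ]
      refine le_trans (le_of_eq ?_) (hg n)
      exact lintegral_congr fun ω => by rw [hΨ'_eq _ (abs_nonneg _)]
    have hρ_fin : ρ (s 0) ≠ ∞ := by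
      refine ne_of_lt (lt_of_le_of_lt (measure_mono (Set.subset_univ _)) ?_)
      rw [hρ_def, Measure.add_apply]
      exact ENNReal.add_lt_top.2 ⟨measure_lt_top _ _,
        lt_of_le_of_lt hν_fin (by norm_num)⟩
    have hiInter : (⋂ M : ℕ, s M) = ∅ := by
      ext ω
      simp only [Set.mem_iInter, Set.mem_empty_iff_false, iff_false, not_forall]
      obtain ⟨M, hM⟩ := exists_nat_gt (|g n ω|)
      exact ⟨M, fun h => absurd h (not_lt.2 hM.le)⟩
    have hT : Filter.Tendsto (ρ ∘ s) Filter.atTop (nhds 0) := by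
      have := tendsto_measure_iInter_atTop (μ := ρ)
        (fun M => (hs_meas M).nullMeasurableSet) hs_anti ⟨0, hρ_fin⟩
      rwa [hiInter, measure_empty] at this
    obtain ⟨M, hM⟩ := (hT.eventually (gt_mem_nhds (he_pos n))).exists
    have hρs : P (s M) + ν (s M) ≤ e n := by
      have := hM.le
      simpa only [Function.comp_apply, hρ_def, Measure.add_apply] using this
    have h1 : P (s M) ≤ e n := le_trans (le_add_right le_rfl) hρs
    have h2 : ν (s M) ≤ e n := le_trans (le_add_left le_rfl) hρs
    rw [hν_def, withDensity_apply _ (hs_meas M)] at h2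
    refine ⟨(M : ℝ), ?_, ?_⟩
    · simpa only [hs_def] using h1
    · simpa only [hs_def] using h2
  choose M hM1 hM2 using key
  set A : ℕ → Set Ω := fun n => {ω | M n < |g n ω|} with hA_def
  have hA_meas : ∀ n, MeasurableSet (A n) := fun n =>
    measurableSet_lt measurable_const (hg_meas n).abs
  set f : ℕ → Ω → ℝ := fun n ω => if M n < |g n ω| then 0 else g n ω with hf_def
  set h : ℕ → Ω → ℝ := fun n => (A n).indicator fun ω => |g n ω| with hh_def
  have hh_nonneg : ∀ n ω, 0 ≤ h n ω := fun n ω =>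
    Set.indicator_nonneg (fun ω _ => abs_nonneg _) ω
  have hh_meas : ∀ n, Measurable (h n) := fun n =>
    (hg_meas n).abs.indicator (hA_meas n)
  have hgf : ∀ n ω, |g n ω - f n ω| = h n ω := by
    intro n ω
    by_cases hω : M n < |g n ω|
    · simp [hf_def, hh_def, hω, Set.indicator_of_mem (show ω ∈ A n from hω)]
    · simp [hf_def, hh_def, hω, Set.indicator_of_notMem (show ω ∉ A n from hω)]
  set S : Ω → ℝ≥0∞ := fun ω => ⨆ n, ENNReal.ofReal (h n ω) with hS_def
  set G : Ω → ℝ := fun ω => (S ω).toReal with hG_def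
  have hS_meas : Measurable S :=
    Measurable.iSup fun n => (hh_meas n).ennreal_ofReal
  have hG_meas : Measurable G := hS_meas.ennreal_toReal
  have hG_nonneg : ∀ ω, 0 ≤ G ω := fun ω => ENNReal.toReal_nonneg
  -- Borel–Cantelli
  have hBC : ∀ᵐ ω ∂P, ∀ᶠ n in Filter.atTop, ω ∉ A n := by
    refine ae_eventually_notMem ?_
    refine ne_of_lt (lt_of_le_of_lt (ENNReal.tsum_le_tsum fun n => hM1 n) ?_)
    rw [he_sum]; norm_num
  -- the key structure on the good set: S is attained
  have hgood : ∀ᵐ ω ∂P, ∃ n0, S ω = ENNReal.ofReal (h n0 ω) := by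
    filter_upwards [hBC] with ω hω
    obtain ⟨N, hN⟩ := Filter.eventually_atTop.1 hω
    have hzero : ∀ n, N ≤ n → h n ω = 0 := fun n hn =>
      Set.indicator_of_notMem (hN n hn) _
    have hSup : S ω = (Finset.range (N + 1)).sup fun n => ENNReal.ofReal (h n ω) := by
      rw [hS_def]
      show (⨆ n, ENNReal.ofReal (h n ω)) = _
      refine le_antisymm (iSup_le fun n => ?_)
        (Finset.sup_le fun n _ => le_iSup (fun m => ENNReal.ofReal (h m ω)) n)
      rcases le_or_gt n N with hn | hn
      · exact Finset.le_sup (f := fun m => ENNReal.ofReal (h m ω))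
          (Finset.mem_range.2 (Nat.lt_succ_of_le hn))
      · rw [hzero n hn.le]; simp
    obtain ⟨n0, _, hn0⟩ := Finset.exists_mem_eq_sup (Finset.range (N + 1))
      ⟨0, Finset.mem_range.2 (Nat.succ_pos _)⟩ fun n => ENNReal.ofReal (h n ω)
    exact ⟨n0, by rw [hSup, hn0]⟩
  have hS_ne_top : ∀ᵐ ω ∂P, S ω ≠ ∞ := by
    filter_upwards [hgood] with ω ⟨n0, hn0⟩
    rw [hn0]; exact ENNReal.ofReal_ne_top
  have hG_eq : ∀ᵐ ω ∂P, ∃ n0, G ω = h n0 ω := by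
    filter_upwards [hgood] with ω ⟨n0, hn0⟩
    exact ⟨n0, by rw [hG_def]; simp [hn0, ENNReal.toReal_ofReal (hh_nonneg n0 ω)]⟩
  refine ⟨f, G, ?_, ?_, hG_meas, hG_nonneg, ?_, ?_⟩
  · intro n
    exact Measurable.ite (measurableSet_lt measurable_const (hg_meas n).abs)
      measurable_const (hg_meas n)
  · intro n
    refine ⟨max (M n) 0, Filter.Eventually.of_forall fun ω => ?_⟩
    by_cases hω : M n < |g n ω|
    · simp [hf_def, hω, le_max_right]
    · simp only [hf_def, hω, if_false]
      exact le_trans (not_lt.1 hω) (le_max_left _ _)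
  · -- integral bound
    have hptwise : ∀ᵐ ω ∂P,
        ENNReal.ofReal (Ψ' (G ω)) ≤ ∑' n, ENNReal.ofReal (Ψ' (h n ω)) := by
      filter_upwards [hG_eq] with ω ⟨n0, hn0⟩
      rw [hn0]
      exact ENNReal.le_tsum n0
    have hterm : ∀ n, ∫⁻ ω, ENNReal.ofReal (Ψ' (h n ω)) ∂P ≤ e n := by
      intro n
      have heq : ∀ ω, ENNReal.ofReal (Ψ' (h n ω)) =
          (A n).indicator (fun ω => ENNReal.ofReal (Ψ' |g n ω|)) ω := by
        intro ω
        by_cases hω : ω ∈ A n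
        · simp [hh_def, Set.indicator_of_mem hω]
        · simp [hh_def, Set.indicator_of_notMem hω, hΨ'_eq 0 le_rfl, hΨ_zero]
      calc ∫⁻ ω, ENNReal.ofReal (Ψ' (h n ω)) ∂P
          = ∫⁻ ω, (A n).indicator (fun ω => ENNReal.ofReal (Ψ' |g n ω|)) ω ∂P :=
            lintegral_congr heq
        _ = ∫⁻ ω in A n, ENNReal.ofReal (Ψ' |g n ω|) ∂P :=
            lintegral_indicator (hA_meas n) _
        _ ≤ e n := hM2 n
    have hint : ∫⁻ ω, ENNReal.ofReal (Ψ' (G ω)) ∂P ≤ 1 := by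
      calc ∫⁻ ω, ENNReal.ofReal (Ψ' (G ω)) ∂P
          ≤ ∫⁻ ω, ∑' n, ENNReal.ofReal (Ψ' (h n ω)) ∂P := lintegral_mono_ae hptwise
        _ = ∑' n, ∫⁻ ω, ENNReal.ofReal (Ψ' (h n ω)) ∂P :=
            lintegral_tsum fun n =>
              ((hΨ'_meas.comp (hh_meas n)).ennreal_ofReal).aemeasurable
        _ ≤ ∑' n, e n := ENNReal.tsum_le_tsum hterm
        _ = 1 := he_sum
    refine le_trans (le_of_eq (lintegral_congr fun ω => ?_)) hint
    rw [hΨ'_eq _ (hG_nonneg ω)]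
  · -- domination
    intro n
    filter_upwards [hS_ne_top] with ω hω
    rw [hgf n ω]
    have h1 : ENNReal.ofReal (h n ω) ≤ S ω := by
      rw [hS_def]
      show _ ≤ ⨆ m, ENNReal.ofReal (h m ω)
      exact le_iSup (fun m => ENNReal.ofReal (h m ω)) n
    have := ENNReal.toReal_mono hω h1
    rwa [ENNReal.toReal_ofReal (hh_nonneg n ω)] at this
end
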